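/- arXiv:1210.2737 — 2 statements merged into one kernel-verified Lean document; each statement's English description precedes it below -/
import Mathlib

section
/- The sum extension in a 3×3 diagram: Assume a 3×3 commuting diagram of C*-algebras with exact rows e_A : A0 →a A1 →a′ A2, e_B : B0 →b B1 →b′ B2, e_C : C0 →c C1 →c′ C2 and exact columns e_i : A_i →u_i B_i →v_i C_i (i = 0,1,2). Identify A1 and B0 with their images u_1(A1) and b(B0) in B1. Then: (1) A1 + B0 := {z + w : z ∈ u_1(A1), w ∈ b(B0)} is a closed two-sided ideal of B1; (2) u_1(A1) ∩ b(B0) = u_1(a(A0)) (= b(u_0(A0))); (3) for every z ∈ A1 + B0 one has b′(z) ∈ u_2(A2) and v_1(z) ∈ c(C0), and the map Ψ : A1 + B0 → A2 ⊕ C0 determined by u_2(Ψ(z)_1) = b′(z) and c(Ψ(z)_2) = v_1(z) is a well-defined surjective *-homomorphism with kernel u_1(a(A0)); hence 0 → A0 → A1 + B0 →Ψ A2 ⊕ C0 → 0 is a short exact sequence. -/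
/-!
Formalization preamble: cones, suspensions, mapping cones of (non-unital) C*-algebras,
their concrete models inside algebras of continuous functions, and functors from
C*-algebras to abelian groups.
-/

set_option maxHeartbeats 1600000
set_option synthInstance.maxHeartbeats 800000

open scoped unitInterval CStarAlgebra

noncomputable section

namespace CStarPaper

variable {A B : Type*} [NonUnitalCStarAlgebra A] [NonUnitalCStarAlgebra B]

/-- The flip of a continuous function on the square `[0,1]²`. -/
def flip2 {A : Type*} [NonUnitalCStarAlgebra A] (f : C(I × I, A)) : C(I × I, A) :=
  f.comp ⟨Prod.swap, continuous_swap⟩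

@[simp] lemma flip2_apply (f : C(I × I, A)) (s t : I) : flip2 f (s, t) = f (t, s) := rfl

/-- The cone `CA = {f ∈ C([0,1],A) : f(0) = 0}` of a C*-algebra `A`. -/
def cone (A : Type*) [NonUnitalCStarAlgebra A] : NonUnitalStarSubalgebra ℂ C(I, A) where
  carrier := {f | f 0 = 0}
  add_mem' := by intro f g hf hg; simp_all [Set.mem_setOf_eq]
  zero_mem' := by simp [Set.mem_setOf_eq]
  mul_mem' := by intro f g hf hg; simp_all [Set.mem_setOf_eq]
  smul_mem' := by intro c f hf; simp_all [Set.mem_setOf_eq]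
  star_mem' := by intro f hf; simp_all [Set.mem_setOf_eq, map_star]

instance cone.isClosed (A : Type*) [NonUnitalCStarAlgebra A] :
    IsClosed ((cone A : Set C(I, A))) :=
  isClosed_eq (continuous_eval_const 0) continuous_const

/-- The suspension `SA = {f ∈ C([0,1],A) : f(0) = f(1) = 0}` of a C*-algebra `A`. -/
def susp (A : Type*) [NonUnitalCStarAlgebra A] : NonUnitalStarSubalgebra ℂ C(I, A) where
  carrier := {f | f 0 = 0 ∧ f 1 = 0}
  add_mem' := by intro f g hf hg; simp_all [Set.mem_setOf_eq]
  zero_mem' := by simp [Set.mem_setOf_eq]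
  mul_mem' := by intro f g hf hg; simp_all [Set.mem_setOf_eq]
  smul_mem' := by intro c f hf; simp_all [Set.mem_setOf_eq]
  star_mem' := by intro f hf; simp_all [Set.mem_setOf_eq, map_star]

instance susp.isClosed (A : Type*) [NonUnitalCStarAlgebra A] :
    IsClosed ((susp A : Set C(I, A))) := by
  have h : (susp A : Set C(I, A)) = {f | f 0 = 0} ∩ {f | f 1 = 0} := rfl
  rw [h]
  exact (isClosed_eq (continuous_eval_const 0) continuous_const).inter
    (isClosed_eq (continuous_eval_const 1) continuous_const)

/-- The mapping cone `C_φ = {(x,y) ∈ A ⊕ CB : φ(x) = y(1)}` of `φ : A → B`. -/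
def mapCone (φ : A →⋆ₙₐ[ℂ] B) : NonUnitalStarSubalgebra ℂ (A × C(I, B)) where
  carrier := {p | p.2 0 = 0 ∧ φ p.1 = p.2 1}
  add_mem' := by intro p q hp hq; simp_all [Set.mem_setOf_eq]
  zero_mem' := by simp [Set.mem_setOf_eq]
  mul_mem' := by intro p q hp hq; simp_all [Set.mem_setOf_eq]
  smul_mem' := by intro c p hp; simp_all [Set.mem_setOf_eq]
  star_mem' := by intro p hp; simp_all [Set.mem_setOf_eq, map_star]

instance mapCone.isClosed (φ : A →⋆ₙₐ[ℂ] B) :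
    IsClosed ((mapCone φ : Set (A × C(I, B)))) := by
  have h : (mapCone φ : Set (A × C(I, B)))
      = {p : A × C(I, B) | p.2 0 = 0} ∩ {p : A × C(I, B) | φ p.1 = p.2 1} := rfl
  rw [h]
  exact (isClosed_eq ((continuous_eval_const 0).comp continuous_snd) continuous_const).inter
    (isClosed_eq ((map_continuous φ).comp continuous_fst)
      ((continuous_eval_const 1).comp continuous_snd))

/-- The canonical inclusion `SA → CA`. -/
def suspIncl (A : Type*) [NonUnitalCStarAlgebra A] : ↥(susp A) →⋆ₙₐ[ℂ] ↥(cone A) where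
  toFun f := ⟨(f : C(I, A)), f.2.1⟩
  map_smul' _ _ := rfl
  map_zero' := rfl
  map_add' _ _ := rfl
  map_mul' _ _ := rfl
  map_star' _ := rfl

/-- Evaluation at `1`, as a *-homomorphism `CA → A`. -/
def coneEval (A : Type*) [NonUnitalCStarAlgebra A] : ↥(cone A) →⋆ₙₐ[ℂ] A where
  toFun f := (f : C(I, A)) 1
  map_smul' _ _ := rfl
  map_zero' := rfl
  map_add' _ _ := rfl
  map_mul' _ _ := rfl
  map_star' _ := rfl

/-- The canonical projection `π_mc : C_φ → A`, `(x,y) ↦ x`. -/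
def mapConeProj (φ : A →⋆ₙₐ[ℂ] B) : ↥(mapCone φ) →⋆ₙₐ[ℂ] A where
  toFun p := (p : A × C(I, B)).1
  map_smul' _ _ := rfl
  map_zero' := rfl
  map_add' _ _ := rfl
  map_mul' _ _ := rfl
  map_star' _ := rfl

/-- The projection `C_φ → CB`, `(x,y) ↦ y`. -/
def mapConeSnd (φ : A →⋆ₙₐ[ℂ] B) : ↥(mapCone φ) →⋆ₙₐ[ℂ] ↥(cone B) where
  toFun p := ⟨(p : A × C(I, B)).2, p.2.1⟩
  map_smul' _ _ := rfl
  map_zero' := rfl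
  map_add' _ _ := rfl
  map_mul' _ _ := rfl
  map_star' _ := rfl

/-- The canonical inclusion `ι_mc : SB → C_φ`, `g ↦ (0,g)`. -/
def mapConeIncl (φ : A →⋆ₙₐ[ℂ] B) : ↥(susp B) →⋆ₙₐ[ℂ] ↥(mapCone φ) where
  toFun g := ⟨(0, (g : C(I, B))), ⟨g.2.1, by simp [g.2.2]⟩⟩
  map_smul' c g := Subtype.ext (by simp [Prod.ext_iff])
  map_zero' := Subtype.ext (by simp [Prod.ext_iff])
  map_add' g h := Subtype.ext (by simp [Prod.ext_iff])
  map_mul' g h := Subtype.ext (by simp [Prod.ext_iff])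
  map_star' g := Subtype.ext (by simp [Prod.ext_iff])

/-- The concrete model of the suspension `S(C_φ)` of a mapping cone, inside
`C([0,1],A) × C([0,1]²,B)`. -/
def suspMapConeModel (φ : A →⋆ₙₐ[ℂ] B) :
    NonUnitalStarSubalgebra ℂ (C(I, A) × C(I × I, B)) where
  carrier := {p | p.1 0 = 0 ∧ p.1 1 = 0 ∧ (∀ t, p.2 (0, t) = 0) ∧ (∀ t, p.2 (1, t) = 0) ∧
    (∀ s, p.2 (s, 0) = 0) ∧ ∀ s, φ (p.1 s) = p.2 (s, 1)}
  add_mem' := by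
    rintro p q ⟨h1, h2, h3, h4, h5, h6⟩ ⟨g1, g2, g3, g4, g5, g6⟩
    exact ⟨by simp [h1, g1], by simp [h2, g2], fun t => by simp [h3 t, g3 t],
      fun t => by simp [h4 t, g4 t], fun s => by simp [h5 s, g5 s],
      fun s => by simp [h6 s, g6 s]⟩
  zero_mem' := ⟨by simp, by simp, fun t => by simp, fun t => by simp, fun s => by simp,
    fun s => by simp⟩
  mul_mem' := by
    rintro p q ⟨h1, h2, h3, h4, h5, h6⟩ ⟨g1, g2, g3, g4, g5, g6⟩
    exact ⟨by simp [h1, g1], by simp [h2, g2], fun t => by simp [h3 t, g3 t],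
      fun t => by simp [h4 t, g4 t], fun s => by simp [h5 s, g5 s],
      fun s => by simp [h6 s, g6 s]⟩
  smul_mem' := by
    rintro c p ⟨h1, h2, h3, h4, h5, h6⟩
    exact ⟨by simp [h1], by simp [h2], fun t => by simp [h3 t],
      fun t => by simp [h4 t], fun s => by simp [h5 s], fun s => by simp [h6 s]⟩
  star_mem' := by
    rintro p ⟨h1, h2, h3, h4, h5, h6⟩
    exact ⟨by simp [h1], by simp [h2], fun t => by simp [h3 t],
      fun t => by simp [h4 t], fun s => by simp [h5 s], fun s => by simp [map_star, h6 s]⟩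

/-- The concrete model of the mapping cone `C_{Sφ}` of the suspension of `φ`, inside
`C([0,1],A) × C([0,1]²,B)`. -/
def mapConeSuspModel (φ : A →⋆ₙₐ[ℂ] B) :
    NonUnitalStarSubalgebra ℂ (C(I, A) × C(I × I, B)) where
  carrier := {p | p.1 0 = 0 ∧ p.1 1 = 0 ∧ (∀ t, p.2 (0, t) = 0) ∧ (∀ s, p.2 (s, 0) = 0) ∧
    (∀ s, p.2 (s, 1) = 0) ∧ ∀ t, φ (p.1 t) = p.2 (1, t)}
  add_mem' := by
    rintro p q ⟨h1, h2, h3, h4, h5, h6⟩ ⟨g1, g2, g3, g4, g5, g6⟩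
    exact ⟨by simp [h1, g1], by simp [h2, g2], fun t => by simp [h3 t, g3 t],
      fun s => by simp [h4 s, g4 s], fun s => by simp [h5 s, g5 s],
      fun t => by simp [h6 t, g6 t]⟩
  zero_mem' := ⟨by simp, by simp, fun t => by simp, fun s => by simp, fun s => by simp,
    fun t => by simp⟩
  mul_mem' := by
    rintro p q ⟨h1, h2, h3, h4, h5, h6⟩ ⟨g1, g2, g3, g4, g5, g6⟩
    exact ⟨by simp [h1, g1], by simp [h2, g2], fun t => by simp [h3 t, g3 t],
      fun s => by simp [h4 s, g4 s], fun s => by simp [h5 s, g5 s],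
      fun t => by simp [h6 t, g6 t]⟩
  smul_mem' := by
    rintro c p ⟨h1, h2, h3, h4, h5, h6⟩
    exact ⟨by simp [h1], by simp [h2], fun t => by simp [h3 t],
      fun s => by simp [h4 s], fun s => by simp [h5 s], fun t => by simp [h6 t]⟩
  star_mem' := by
    rintro p ⟨h1, h2, h3, h4, h5, h6⟩
    exact ⟨by simp [h1], by simp [h2], fun t => by simp [h3 t],
      fun s => by simp [h4 s], fun s => by simp [h5 s], fun t => by simp [map_star, h6 t]⟩

/-- The concrete model of the cone `C(C_φ)` of a mapping cone, inside
`C([0,1],A) × C([0,1]²,B)`. -/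
def coneMapConeModel (φ : A →⋆ₙₐ[ℂ] B) :
    NonUnitalStarSubalgebra ℂ (C(I, A) × C(I × I, B)) where
  carrier := {p | p.1 0 = 0 ∧ (∀ t, p.2 (0, t) = 0) ∧ (∀ s, p.2 (s, 0) = 0) ∧
    ∀ s, φ (p.1 s) = p.2 (s, 1)}
  add_mem' := by
    rintro p q ⟨h1, h3, h5, h6⟩ ⟨g1, g3, g5, g6⟩
    exact ⟨by simp [h1, g1], fun t => by simp [h3 t, g3 t], fun s => by simp [h5 s, g5 s],
      fun s => by simp [h6 s, g6 s]⟩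
  zero_mem' := ⟨by simp, fun t => by simp, fun s => by simp, fun s => by simp⟩
  mul_mem' := by
    rintro p q ⟨h1, h3, h5, h6⟩ ⟨g1, g3, g5, g6⟩
    exact ⟨by simp [h1, g1], fun t => by simp [h3 t, g3 t], fun s => by simp [h5 s, g5 s],
      fun s => by simp [h6 s, g6 s]⟩
  smul_mem' := by
    rintro c p ⟨h1, h3, h5, h6⟩
    exact ⟨by simp [h1], fun t => by simp [h3 t], fun s => by simp [h5 s],
      fun s => by simp [h6 s]⟩
  star_mem' := by
    rintro p ⟨h1, h3, h5, h6⟩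
    exact ⟨by simp [h1], fun t => by simp [h3 t], fun s => by simp [h5 s],
      fun s => by simp [map_star, h6 s]⟩

/-- The concrete model of the mapping cone `C_{Cφ}` of the cone of `φ`, inside
`C([0,1],A) × C([0,1]²,B)`. -/
def mapConeConeModel (φ : A →⋆ₙₐ[ℂ] B) :
    NonUnitalStarSubalgebra ℂ (C(I, A) × C(I × I, B)) where
  carrier := {p | p.1 0 = 0 ∧ (∀ t, p.2 (0, t) = 0) ∧ (∀ s, p.2 (s, 0) = 0) ∧
    ∀ t, φ (p.1 t) = p.2 (1, t)}
  add_mem' := by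
    rintro p q ⟨h1, h3, h5, h6⟩ ⟨g1, g3, g5, g6⟩
    exact ⟨by simp [h1, g1], fun t => by simp [h3 t, g3 t], fun s => by simp [h5 s, g5 s],
      fun t => by simp [h6 t, g6 t]⟩
  zero_mem' := ⟨by simp, fun t => by simp, fun s => by simp, fun t => by simp⟩
  mul_mem' := by
    rintro p q ⟨h1, h3, h5, h6⟩ ⟨g1, g3, g5, g6⟩
    exact ⟨by simp [h1, g1], fun t => by simp [h3 t, g3 t], fun s => by simp [h5 s, g5 s],
      fun t => by simp [h6 t, g6 t]⟩
  smul_mem' := by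
    rintro c p ⟨h1, h3, h5, h6⟩
    exact ⟨by simp [h1], fun t => by simp [h3 t], fun s => by simp [h5 s],
      fun t => by simp [h6 t]⟩
  star_mem' := by
    rintro p ⟨h1, h3, h5, h6⟩
    exact ⟨by simp [h1], fun t => by simp [h3 t], fun s => by simp [h5 s],
      fun t => by simp [map_star, h6 t]⟩

variable {X Y₁ Y₂ Z : Type*} [NonUnitalCStarAlgebra X] [NonUnitalCStarAlgebra Y₁]
  [NonUnitalCStarAlgebra Y₂] [NonUnitalCStarAlgebra Z]

/-- The canonical concrete realization of the double mapping cone associated to a commuting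
square `ψ₁ ∘ φ₁ = ψ₂ ∘ φ₂`, inside `X × C([0,1],Y₁) × C([0,1],Y₂) × C([0,1]²,Z)`. -/
def dblCone (φ₁ : X →⋆ₙₐ[ℂ] Y₁) (φ₂ : X →⋆ₙₐ[ℂ] Y₂) (ψ₁ : Y₁ →⋆ₙₐ[ℂ] Z) (ψ₂ : Y₂ →⋆ₙₐ[ℂ] Z) :
    NonUnitalStarSubalgebra ℂ (X × C(I, Y₁) × C(I, Y₂) × C(I × I, Z)) where
  carrier := {p | p.2.1 0 = 0 ∧ p.2.2.1 0 = 0 ∧ (∀ t, p.2.2.2 (0, t) = 0) ∧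
    (∀ s, p.2.2.2 (s, 0) = 0) ∧ φ₁ p.1 = p.2.1 1 ∧ φ₂ p.1 = p.2.2.1 1 ∧
    (∀ t, ψ₁ (p.2.1 t) = p.2.2.2 (1, t)) ∧ ∀ s, ψ₂ (p.2.2.1 s) = p.2.2.2 (s, 1)}
  add_mem' := by
    rintro p q ⟨h1, h2, h3, h4, h5, h6, h7, h8⟩ ⟨g1, g2, g3, g4, g5, g6, g7, g8⟩
    exact ⟨by simp [h1, g1], by simp [h2, g2], fun t => by simp [h3 t, g3 t],
      fun s => by simp [h4 s, g4 s], by simp [h5, g5], by simp [h6, g6],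
      fun t => by simp [h7 t, g7 t], fun s => by simp [h8 s, g8 s]⟩
  zero_mem' := ⟨by simp, by simp, fun t => by simp, fun s => by simp, by simp, by simp,
    fun t => by simp, fun s => by simp⟩
  mul_mem' := by
    rintro p q ⟨h1, h2, h3, h4, h5, h6, h7, h8⟩ ⟨g1, g2, g3, g4, g5, g6, g7, g8⟩
    exact ⟨by simp [h1, g1], by simp [h2, g2], fun t => by simp [h3 t, g3 t],
      fun s => by simp [h4 s, g4 s], by simp [h5, g5], by simp [h6, g6],
      fun t => by simp [h7 t, g7 t], fun s => by simp [h8 s, g8 s]⟩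
  smul_mem' := by
    rintro c p ⟨h1, h2, h3, h4, h5, h6, h7, h8⟩
    exact ⟨by simp [h1], by simp [h2], fun t => by simp [h3 t], fun s => by simp [h4 s],
      by simp [h5], by simp [h6], fun t => by simp [h7 t], fun s => by simp [h8 s]⟩
  star_mem' := by
    rintro p ⟨h1, h2, h3, h4, h5, h6, h7, h8⟩
    exact ⟨by simp [h1], by simp [h2], fun t => by simp [h3 t], fun s => by simp [h4 s],
      by simp [map_star, h5], by simp [map_star, h6], fun t => by simp [map_star, h7 t],
      fun s => by simp [map_star, h8 s]⟩

/-- The pullback of two *-homomorphisms with common codomain, as a *-subalgebra of the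
direct sum. -/
def pullbackAlg {B₂ C₁ C₂ : Type*} [NonUnitalCStarAlgebra B₂] [NonUnitalCStarAlgebra C₁]
    [NonUnitalCStarAlgebra C₂] (v : B₂ →⋆ₙₐ[ℂ] C₂) (w : C₁ →⋆ₙₐ[ℂ] C₂) :
    NonUnitalStarSubalgebra ℂ (B₂ × C₁) where
  carrier := {p | v p.1 = w p.2}
  add_mem' := by intro p q hp hq; simp_all [Set.mem_setOf_eq]
  zero_mem' := by simp [Set.mem_setOf_eq]
  mul_mem' := by intro p q hp hq; simp_all [Set.mem_setOf_eq]
  smul_mem' := by intro c p hp; simp_all [Set.mem_setOf_eq]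
  star_mem' := by intro p hp; simp_all [Set.mem_setOf_eq, map_star]

/-- `ι, π` form a short exact sequence. -/
def IsShortExact {A₀ A₁ A₂ : Type*}
    [NonUnitalNonAssocSemiring A₀] [NonUnitalNonAssocSemiring A₁] [NonUnitalNonAssocSemiring A₂]
    [DistribMulAction ℂ A₀] [DistribMulAction ℂ A₁] [DistribMulAction ℂ A₂]
    [Star A₀] [Star A₁] [Star A₂]
    (ι : A₀ →⋆ₙₐ[ℂ] A₁) (π : A₁ →⋆ₙₐ[ℂ] A₂) : Prop :=
  Function.Injective ι ∧ Function.Surjective π ∧ Set.range ι = {b | π b = 0}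


/-- The sum extension `0 → A₀ → A₁ + B₀ → A₂ ⊕ C₀ → 0` in a 3×3 diagram. -/
theorem statement16 {A₀ A₁ A₂ B₀ B₁ B₂ C₀ C₁ C₂ : Type*}
    [NonUnitalCStarAlgebra A₀] [NonUnitalCStarAlgebra A₁] [NonUnitalCStarAlgebra A₂]
    [NonUnitalCStarAlgebra B₀] [NonUnitalCStarAlgebra B₁] [NonUnitalCStarAlgebra B₂]
    [NonUnitalCStarAlgebra C₀] [NonUnitalCStarAlgebra C₁] [NonUnitalCStarAlgebra C₂]
    -- exact rows
    (a : A₀ →⋆ₙₐ[ℂ] A₁) (a' : A₁ →⋆ₙₐ[ℂ] A₂) (hrA : IsShortExact a a')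
    (b : B₀ →⋆ₙₐ[ℂ] B₁) (b' : B₁ →⋆ₙₐ[ℂ] B₂) (hrB : IsShortExact b b')
    (c : C₀ →⋆ₙₐ[ℂ] C₁) (c' : C₁ →⋆ₙₐ[ℂ] C₂) (hrC : IsShortExact c c')
    -- exact columns
    (u₀ : A₀ →⋆ₙₐ[ℂ] B₀) (v₀ : B₀ →⋆ₙₐ[ℂ] C₀) (hc₀ : IsShortExact u₀ v₀)
    (u₁ : A₁ →⋆ₙₐ[ℂ] B₁) (v₁ : B₁ →⋆ₙₐ[ℂ] C₁) (hc₁ : IsShortExact u₁ v₁)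
    (u₂ : A₂ →⋆ₙₐ[ℂ] B₂) (v₂ : B₂ →⋆ₙₐ[ℂ] C₂) (hc₂ : IsShortExact u₂ v₂)
    -- commuting squares
    (hsq₁ : ∀ p, u₁ (a p) = b (u₀ p)) (hsq₂ : ∀ p, u₂ (a' p) = b' (u₁ p))
    (hsq₃ : ∀ q, v₁ (b q) = c (v₀ q)) (hsq₄ : ∀ q, v₂ (b' q) = c' (v₁ q)) :
    -- (2) `u₁(A₁) ∩ b(B₀) = u₁(a(A₀))`
    (Set.range u₁ ∩ Set.range b = Set.range fun p => u₁ (a p)) ∧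
    -- (1),(3): `A₁ + B₀` is a closed two-sided ideal of `B₁`, and the induced map `Ψ` onto
    -- `A₂ ⊕ C₀` is a well-defined surjective *-homomorphism with kernel `u₁(a(A₀))`
    ∃ T : NonUnitalStarSubalgebra ℂ B₁,
      (T : Set B₁) = {z | ∃ p q, u₁ p + b q = z} ∧
      IsClosed (T : Set B₁) ∧
      (∀ z ∈ T, ∀ w : B₁, w * z ∈ T ∧ z * w ∈ T) ∧
      ∃ (Ψ : ↥T →⋆ₙₐ[ℂ] A₂ × C₀) (j : A₀ →⋆ₙₐ[ℂ] ↥T),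
        (∀ z : ↥T, u₂ (Ψ z).1 = b' z.val ∧ c (Ψ z).2 = v₁ z.val) ∧
        Function.Surjective Ψ ∧
        (∀ z : ↥T, Ψ z = 0 ↔ ∃ p, u₁ (a p) = z.val) ∧
        (∀ p, (j p).val = u₁ (a p)) ∧
        IsShortExact j Ψ := by
  obtain ⟨haInj, ha'Surj, hkA⟩ := hrA
  obtain ⟨hbInj, hb'Surj, hkB⟩ := hrB
  obtain ⟨hcInj, hc'Surj, hkC⟩ := hrC
  obtain ⟨hu₀Inj, hv₀Surj, hk₀⟩ := hc₀
  obtain ⟨hu₁Inj, hv₁Surj, hk₁⟩ := hc₁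
  obtain ⟨hu₂Inj, hv₂Surj, hk₂⟩ := hc₂
  have haa' : ∀ p, a' (a p) = 0 := fun p => hkA.le (Set.mem_range_self p)
  have hbb' : ∀ q, b' (b q) = 0 := fun q => hkB.le (Set.mem_range_self q)
  have huv₁ : ∀ x, v₁ (u₁ x) = 0 := fun x => hk₁.le (Set.mem_range_self x)
  have huv₂ : ∀ x, v₂ (u₂ x) = 0 := fun x => hk₂.le (Set.mem_range_self x)
  -- part (2)
  have hInt : Set.range u₁ ∩ Set.range b = Set.range fun p => u₁ (a p) := by
    ext z
    constructor
    · rintro ⟨⟨p, hp⟩, ⟨q, hq⟩⟩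
      have h1 : u₂ (a' p) = 0 := by rw [hsq₂, hp, ← hq, hbb']
      have h2 : a' p = 0 := hu₂Inj (by rw [h1, map_zero])
      obtain ⟨p₀, hp₀⟩ := hkA.ge (h2 : p ∈ {x | a' x = 0})
      exact ⟨p₀, by show u₁ (a p₀) = z; rw [hp₀, hp]⟩
    · rintro ⟨p, hp⟩
      have hp' : u₁ (a p) = z := hp
      exact ⟨⟨a p, hp'⟩, ⟨u₀ p, by rw [← hsq₁]; exact hp'⟩⟩
  refine ⟨hInt, ?_⟩
  -- the sum ideal, realized as the kernel of `v₂ ∘ b'`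
  let T : NonUnitalStarSubalgebra ℂ B₁ :=
    { carrier := {z | v₂ (b' z) = 0}
      add_mem' := by
        intro x y hx hy
        simp only [Set.mem_setOf_eq] at *
        rw [map_add, map_add, hx, hy, add_zero]
      zero_mem' := by simp
      mul_mem' := by
        intro x y hx hy
        simp only [Set.mem_setOf_eq] at *
        rw [map_mul, map_mul, hx, zero_mul]
      smul_mem' := by
        intro r x hx
        simp only [Set.mem_setOf_eq] at *
        rw [map_smul, map_smul, hx, smul_zero]
      star_mem' := by
        intro x hx
        simp only [Set.mem_setOf_eq] at *
        rw [map_star, map_star, hx, star_zero] }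
  have memT : ∀ z : B₁, z ∈ T ↔ v₂ (b' z) = 0 := fun z => Iff.rfl
  have hTset : (T : Set B₁) = {z | ∃ p q, u₁ p + b q = z} := by
    ext z
    constructor
    · intro hz
      obtain ⟨x, hx⟩ := hk₂.ge ((memT z).mp hz : b' z ∈ {y | v₂ y = 0})
      obtain ⟨p, hp⟩ := ha'Surj x
      have hd : b' (z - u₁ p) = 0 := by rw [map_sub, ← hsq₂, hp, hx, sub_self]
      obtain ⟨q, hq⟩ := hkB.ge (hd : (z - u₁ p) ∈ {y | b' y = 0})
      exact ⟨p, q, by rw [hq]; abel⟩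
    · rintro ⟨p, q, rfl⟩
      show v₂ (b' (u₁ p + b q)) = 0
      rw [map_add, ← hsq₂, hbb', map_add, huv₂, map_zero, add_zero]
  -- the components of Ψ via injectivity of u₂ and c
  have hf : ∀ z : ↥T, ∃ x, u₂ x = b' (z : B₁) :=
    fun z => hk₂.ge ((z.2 : v₂ (b' (z : B₁)) = 0) : b' (z : B₁) ∈ {y | v₂ y = 0})
  have hg : ∀ z : ↥T, ∃ y, c y = v₁ (z : B₁) := fun z =>
    hkC.ge ((by rw [← hsq₄]; exact z.2 : c' (v₁ (z : B₁)) = 0) :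
      v₁ (z : B₁) ∈ {y | c' y = 0})
  let f : ↥T → A₂ := fun z => (hf z).choose
  let g : ↥T → C₀ := fun z => (hg z).choose
  have hfs : ∀ z : ↥T, u₂ (f z) = b' (z : B₁) := fun z => (hf z).choose_spec
  have hgs : ∀ z : ↥T, c (g z) = v₁ (z : B₁) := fun z => (hg z).choose_spec
  have coe_add : ∀ z w : ↥T, ((z + w : ↥T) : B₁) = (z : B₁) + (w : B₁) := fun _ _ => rfl
  have coe_mul : ∀ z w : ↥T, ((z * w : ↥T) : B₁) = (z : B₁) * (w : B₁) := fun _ _ => rfl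
  have coe_smul : ∀ (r : ℂ) (z : ↥T), ((r • z : ↥T) : B₁) = r • (z : B₁) := fun _ _ => rfl
  have coe_star : ∀ z : ↥T, ((star z : ↥T) : B₁) = star (z : B₁) := fun _ => rfl
  let Ψ : ↥T →⋆ₙₐ[ℂ] A₂ × C₀ :=
    { toFun := fun z => (f z, g z)
      map_smul' := fun r z => by
        refine Prod.ext ?_ ?_
        · show f (r • z) = r • f z
          exact hu₂Inj (by rw [hfs, coe_smul, map_smul, map_smul, hfs])
        · show g (r • z) = r • g z
          exact hcInj (by rw [hgs, coe_smul, map_smul, map_smul, hgs])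
      map_zero' := by
        refine Prod.ext ?_ ?_
        · show f 0 = 0
          refine hu₂Inj ?_
          rw [hfs, map_zero]
          show b' ((0 : ↥T) : B₁) = 0
          rw [show ((0 : ↥T) : B₁) = 0 from rfl, map_zero]
        · show g 0 = 0
          refine hcInj ?_
          rw [hgs, map_zero]
          show v₁ ((0 : ↥T) : B₁) = 0
          rw [show ((0 : ↥T) : B₁) = 0 from rfl, map_zero]
      map_add' := fun z w => by
        refine Prod.ext ?_ ?_
        · show f (z + w) = f z + f w
          exact hu₂Inj (by rw [hfs, coe_add, map_add, map_add, hfs, hfs])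
        · show g (z + w) = g z + g w
          exact hcInj (by rw [hgs, coe_add, map_add, map_add, hgs, hgs])
      map_mul' := fun z w => by
        refine Prod.ext ?_ ?_
        · show f (z * w) = f z * f w
          exact hu₂Inj (by rw [hfs, coe_mul, map_mul, map_mul, hfs, hfs])
        · show g (z * w) = g z * g w
          exact hcInj (by rw [hgs, coe_mul, map_mul, map_mul, hgs, hgs])
      map_star' := fun z => by
        refine Prod.ext ?_ ?_
        · show f (star z) = star (f z)
          exact hu₂Inj (by rw [hfs, coe_star, map_star, map_star, hfs])
        · show g (star z) = star (g z)
          exact hcInj (by rw [hgs, coe_star, map_star, map_star, hgs]) }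
  have hΨfst : ∀ z : ↥T, (Ψ z).1 = f z := fun _ => rfl
  have hΨsnd : ∀ z : ↥T, (Ψ z).2 = g z := fun _ => rfl
  -- kernel characterization
  have hker : ∀ z : ↥T, Ψ z = 0 ↔ ∃ p, u₁ (a p) = (z : B₁) := by
    intro z
    constructor
    · intro h
      have h1 : f z = 0 := congrArg Prod.fst h
      have h2 : g z = 0 := congrArg Prod.snd h
      have hb'z : b' (z : B₁) = 0 := by rw [← hfs, h1, map_zero]
      have hv₁z : v₁ (z : B₁) = 0 := by rw [← hgs, h2, map_zero]
      have hmem : (z : B₁) ∈ Set.range u₁ ∩ Set.range b :=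
        ⟨hk₁.ge (hv₁z : (z : B₁) ∈ {y | v₁ y = 0}),
         hkB.ge (hb'z : (z : B₁) ∈ {y | b' y = 0})⟩
      rw [hInt] at hmem
      exact hmem
    · rintro ⟨p, hp⟩
      have h1 : f z = 0 := hu₂Inj (by
        rw [hfs, ← hp, ← hsq₂, haa'])
      have h2 : g z = 0 := hcInj (by rw [hgs, ← hp, huv₁, map_zero])
      exact Prod.ext h1 h2
  -- surjectivity
  have hsurj : Function.Surjective Ψ := by
    rintro ⟨x, y⟩
    obtain ⟨p, hp⟩ := ha'Surj x
    obtain ⟨q, hq⟩ := hv₀Surj y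
    have hmem : u₁ p + b q ∈ T := by
      show v₂ (b' (u₁ p + b q)) = 0
      rw [map_add, ← hsq₂, hbb', map_add, huv₂, map_zero, add_zero]
    refine ⟨⟨u₁ p + b q, hmem⟩, Prod.ext ?_ ?_⟩
    · refine hu₂Inj ?_
      show u₂ (f ⟨u₁ p + b q, hmem⟩) = u₂ x
      rw [hfs]
      show b' (u₁ p + b q) = u₂ x
      rw [map_add, hbb', add_zero, ← hsq₂, hp]
    · refine hcInj ?_
      show c (g ⟨u₁ p + b q, hmem⟩) = c y
      rw [hgs]
      show v₁ (u₁ p + b q) = c y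
      rw [map_add, huv₁, zero_add, hsq₃, hq]
  -- the inclusion j : A₀ → T
  have hjmem : ∀ p : A₀, u₁ (a p) ∈ T := fun p => by
    show v₂ (b' (u₁ (a p))) = 0
    rw [← hsq₂, huv₂]
  let j : A₀ →⋆ₙₐ[ℂ] ↥T :=
    { toFun := fun p => ⟨u₁ (a p), hjmem p⟩
      map_smul' := fun r p => Subtype.ext (by
        rw [coe_smul]; show u₁ (a (r • p)) = r • u₁ (a p); rw [map_smul, map_smul])
      map_zero' := Subtype.ext (by show u₁ (a 0) = ((0 : ↥T) : B₁); simp)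
      map_add' := fun p q => Subtype.ext (by
        rw [coe_add]; show u₁ (a (p + q)) = u₁ (a p) + u₁ (a q); rw [map_add, map_add])
      map_mul' := fun p q => Subtype.ext (by
        rw [coe_mul]; show u₁ (a (p * q)) = u₁ (a p) * u₁ (a q); rw [map_mul, map_mul])
      map_star' := fun p => Subtype.ext (by
        rw [coe_star]; show u₁ (a (star p)) = star (u₁ (a p)); rw [map_star, map_star]) }
  have hjval : ∀ p, ((j p : ↥T) : B₁) = u₁ (a p) := fun _ => rfl
  have hjInj : Function.Injective j := by
    intro p p' h
    have : u₁ (a p) = u₁ (a p') := by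
      rw [← hjval, ← hjval, h]
    exact haInj (hu₁Inj this)
  have hclosed : IsClosed (T : Set B₁) := by
    have : (T : Set B₁) = {z | v₂ (b' z) = 0} := rfl
    rw [this]
    exact isClosed_eq ((map_continuous v₂).comp (map_continuous b')) continuous_const
  have hideal : ∀ z ∈ T, ∀ w : B₁, w * z ∈ T ∧ z * w ∈ T := by
    intro z hz w
    have hz' : v₂ (b' z) = 0 := hz
    constructor
    · show v₂ (b' (w * z)) = 0
      rw [map_mul, map_mul, hz', mul_zero]
    · show v₂ (b' (z * w)) = 0
      rw [map_mul, map_mul, hz', zero_mul]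
  refine ⟨T, hTset, hclosed, hideal, Ψ, j, fun z => ⟨hfs z, hgs z⟩, hsurj, hker,
    fun p => rfl, hjInj, hsurj, ?_⟩
  ext z
  simp only [Set.mem_range, Set.mem_setOf_eq]
  constructor
  · rintro ⟨p, rfl⟩
    exact (hker (j p)).mpr ⟨p, (hjval p).symm⟩
  · intro hz
    obtain ⟨p, hp⟩ := (hker z).mp hz
    exact ⟨p, Subtype.ext (by rw [hjval]; exact hp)⟩

end CStarPaper
end
end

section
/- The pullback extension in a 3×3 diagram: Assume a 3×3 commuting diagram of C*-algebras with exact rows e_A : A0 →a A1 →a′ A2, e_B : B0 →b B1 →b′ B2, e_C : C0 →c C1 →c′ C2 and exact columns e_i : A_i →u_i B_i →v_i C_i (i = 0,1,2). Let D := {(x, y) ∈ B2 ⊕ C1 : v_2(x) = c′(y)} be the pullback of v_2 : B2 → C2 and c′ : C1 → C2, a closed *-subalgebra of B2 ⊕ C1. Then the sequence 0 → A2 ⊕ C0 → D → C2 → 0 is exact, where the first map is (p, q) ↦ (u_2(p), c(q)) and the second map is (x, y) ↦ v_2(x): the first map is an injective *-homomorphism, the second is a surjective *-homomorphism, and the range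 of the first equals the kernel of the second. -/
/-!
Formalization preamble: cones, suspensions, mapping cones of (non-unital) C*-algebras,
their concrete models inside algebras of continuous functions, and functors from
C*-algebras to abelian groups.
-/

set_option maxHeartbeats 1600000
set_option synthInstance.maxHeartbeats 800000

open scoped unitInterval CStarAlgebra

noncomputable section

namespace CStarPaper

variable {A B : Type*} [NonUnitalCStarAlgebra A] [NonUnitalCStarAlgebra B]

variable {X Y₁ Y₂ Z : Type*} [NonUnitalCStarAlgebra X] [NonUnitalCStarAlgebra Y₁]
  [NonUnitalCStarAlgebra Y₂] [NonUnitalCStarAlgebra Z]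

/-- The pullback extension `0 → A₂ ⊕ C₀ → D → C₂ → 0` in a 3×3 diagram. -/
theorem statement17 {A₀ A₁ A₂ B₀ B₁ B₂ C₀ C₁ C₂ : Type*}
    [NonUnitalCStarAlgebra A₀] [NonUnitalCStarAlgebra A₁] [NonUnitalCStarAlgebra A₂]
    [NonUnitalCStarAlgebra B₀] [NonUnitalCStarAlgebra B₁] [NonUnitalCStarAlgebra B₂]
    [NonUnitalCStarAlgebra C₀] [NonUnitalCStarAlgebra C₁] [NonUnitalCStarAlgebra C₂]
    -- exact rows
    (a : A₀ →⋆ₙₐ[ℂ] A₁) (a' : A₁ →⋆ₙₐ[ℂ] A₂) (hrA : IsShortExact a a')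
    (b : B₀ →⋆ₙₐ[ℂ] B₁) (b' : B₁ →⋆ₙₐ[ℂ] B₂) (hrB : IsShortExact b b')
    (c : C₀ →⋆ₙₐ[ℂ] C₁) (c' : C₁ →⋆ₙₐ[ℂ] C₂) (hrC : IsShortExact c c')
    -- exact columns
    (u₀ : A₀ →⋆ₙₐ[ℂ] B₀) (v₀ : B₀ →⋆ₙₐ[ℂ] C₀) (hc₀ : IsShortExact u₀ v₀)
    (u₁ : A₁ →⋆ₙₐ[ℂ] B₁) (v₁ : B₁ →⋆ₙₐ[ℂ] C₁) (hc₁ : IsShortExact u₁ v₁)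
    (u₂ : A₂ →⋆ₙₐ[ℂ] B₂) (v₂ : B₂ →⋆ₙₐ[ℂ] C₂) (hc₂ : IsShortExact u₂ v₂)
    -- commuting squares
    (hsq₁ : ∀ p, u₁ (a p) = b (u₀ p)) (hsq₂ : ∀ p, u₂ (a' p) = b' (u₁ p))
    (hsq₃ : ∀ q, v₁ (b q) = c (v₀ q)) (hsq₄ : ∀ q, v₂ (b' q) = c' (v₁ q)) :
    -- with `D = pullbackAlg v₂ c'` the pullback of `v₂ : B₂ → C₂` and `c' : C₁ → C₂`,
    -- the sequence `0 → A₂ ⊕ C₀ → D → C₂ → 0` is exact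
    ∃ (j : (A₂ × C₀) →⋆ₙₐ[ℂ] ↥(pullbackAlg v₂ c'))
      (prj : ↥(pullbackAlg v₂ c') →⋆ₙₐ[ℂ] C₂),
      (∀ p : A₂ × C₀, (j p).val = (u₂ p.1, c p.2)) ∧
      (∀ d, prj d = v₂ d.val.1) ∧
      Function.Injective j ∧
      Function.Surjective prj ∧
      Set.range j = {d | prj d = 0} := by
  have hv₂u₂ : ∀ p : A₂, v₂ (u₂ p) = 0 := fun p => by
    have : u₂ p ∈ Set.range u₂ := ⟨p, rfl⟩
    rwa [hc₂.2.2] at this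
  have hc'c : ∀ q : C₀, c' (c q) = 0 := fun q => by
    have : c q ∈ Set.range c := ⟨q, rfl⟩
    rwa [hrC.2.2] at this
  have hmem : ∀ p : A₂ × C₀, (u₂ p.1, c p.2) ∈ pullbackAlg v₂ c' := fun p => by
    show v₂ (u₂ p.1) = c' (c p.2)
    rw [hv₂u₂, hc'c]
  refine ⟨{ toFun := fun p => ⟨(u₂ p.1, c p.2), hmem p⟩,
            map_smul' := fun r p => Subtype.ext (by simp [Prod.ext_iff]),
            map_zero' := Subtype.ext (by simp [Prod.ext_iff]),
            map_add' := fun p q => Subtype.ext (by simp [Prod.ext_iff]),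
            map_mul' := fun p q => Subtype.ext (by simp [Prod.ext_iff]),
            map_star' := fun p => Subtype.ext (by simp [Prod.ext_iff, map_star]) },
          { toFun := fun d => v₂ d.val.1,
            map_smul' := fun r d => by simp,
            map_zero' := by simp,
            map_add' := fun d e => by simp,
            map_mul' := fun d e => by simp,
            map_star' := fun d => by simp [map_star] },
          fun p => rfl, fun d => rfl, ?_, ?_, ?_⟩
  · intro p q h
    have h' : (u₂ p.1, c p.2) = (u₂ q.1, c q.2) := congrArg Subtype.val h
    have h1 := hc₂.1 (congrArg Prod.fst h')
    have h2 := hrC.1 (congrArg Prod.snd h')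
    exact Prod.ext h1 h2
  · intro z
    obtain ⟨x, hx⟩ := hc₂.2.1 z
    obtain ⟨y, hy⟩ := hrC.2.1 (v₂ x)
    exact ⟨⟨(x, y), hy.symm⟩, hx⟩
  · ext d
    constructor
    · rintro ⟨p, rfl⟩
      exact hv₂u₂ p.1
    · intro hd
      have hx : d.val.1 ∈ Set.range u₂ := by rw [hc₂.2.2]; exact hd
      have hy : d.val.2 ∈ Set.range c := by
        rw [hrC.2.2]
        show c' d.val.2 = 0
        have := d.property
        simp only [pullbackAlg, Set.mem_setOf_eq] at this
        rw [← this]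
        exact hd
      obtain ⟨p, hp⟩ := hx
      obtain ⟨q, hq⟩ := hy
      exact ⟨(p, q), Subtype.ext (Prod.ext hp hq)⟩


end CStarPaper
end
end
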